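/- No recursive amplification construction with a base function on d variables can be d-th order sensitive when composed with base functions of sensitivity order less than d. Precisely: if f^1 : F_2^d → F_2 is not d-th order sensitive (i.e., has sensitivity order < d), and f^u(x) = f^1(ĝ_1(block_1), ..., ĝ_d(block_d)) where each ĝ_j ∈ {f^{u−1}, 1 ⊕ f^{u−1}}, then f^u is not d-th order sensitive for any u ≥ 1. -/

import Mathlib

/-- Flip the bits of `x` indexed by `S`. -/
def flipS {ι : Type*} [DecidableEq ι] (x : ι → Bool) (S : Finset ι) : ι → Bool :=
  fun i => if i ∈ S then !x i else x i

/-- General recursive amplification with sign choices `ε`: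
`f^{u+1}(x) = f(…, ε_u(j) ⊕ f^u(block_j x), …)`, so each inner function is
`f^u` or its complement. -/
def Gu (d : ℕ) (f : (Fin d → Bool) → Bool) (ε : ℕ → Fin d → Bool) :
    (u : ℕ) → ((Fin (u + 1) → Fin d) → Bool) → Bool
  | 0 => fun x => f (fun i => x (fun _ => i))
  | u + 1 => fun x => f (fun j => xor (ε u j) (Gu d f ε u (fun t => x (Fin.cons j t))))

/-- If the base function `f` is not `d`-th order sensitive, then no recursive
amplification of it (with arbitrary complementations) is `d`-th order sensitive. -/
theorem stmt18 (d : ℕ) (f : (Fin d → Bool) → Bool)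
    (hf : ¬ ∃ x : Fin d → Bool,
      ∀ S : Finset (Fin d), 1 ≤ S.card → S.card ≤ d → f (flipS x S) ≠ f x)
    (ε : ℕ → Fin d → Bool) :
    ∀ u : ℕ, ¬ ∃ x : (Fin (u + 1) → Fin d) → Bool,
      ∀ S : Finset (Fin (u + 1) → Fin d), 1 ≤ S.card → S.card ≤ d →
        Gu d f ε u (flipS x S) ≠ Gu d f ε u x := by
  intro u
  rcases Nat.eq_zero_or_pos d with hd | hd
  · subst hd
    intro _
    exact hf ⟨fun _ => false, fun S h1 h2 => absurd (h1.trans h2) (by omega)⟩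
  rintro ⟨x, hx⟩
  apply hf
  cases u with
  | zero =>
    refine ⟨fun i => x (fun _ => i), fun T h1 h2 => ?_⟩
    have einj : Function.Injective (fun i : Fin d => (fun _ => i : Fin 1 → Fin d)) :=
      fun a b h => congrFun h 0
    have key := hx (T.map ⟨_, einj⟩) (by simpa using h1) (by simpa using h2)
    have heq : Gu d f ε 0 (flipS x (T.map ⟨_, einj⟩)) = f (flipS (fun i => x fun _ => i) T) := by
      show f _ = f _
      congr 1
      funext i
      simp only [flipS, Finset.mem_map, Function.Embedding.coeFn_mk]
      by_cases h : i ∈ T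
      · rw [if_pos h, if_pos ⟨i, h, rfl⟩]
      · rw [if_neg h, if_neg]
        rintro ⟨a, ha, hae⟩
        exact h ((congrFun hae 0) ▸ ha)
    rw [heq] at key
    exact key
  | succ v =>
    have t0 : Fin (v + 1) → Fin d := fun _ => ⟨0, hd⟩
    have einj : Function.Injective
        (fun j : Fin d => (Fin.cons j t0 : Fin (v + 1 + 1) → Fin d)) := by
      intro a b h
      simpa using congrFun h 0
    -- flipping the single bit `Fin.cons j t0` flips the inner value of block `j`
    have key1 : ∀ j : Fin d,
        Gu d f ε v (fun t => flipS x {Fin.cons j t0} (Fin.cons j t))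
          = ! Gu d f ε v (fun t => x (Fin.cons j t)) := by
      intro j
      have h1 := hx {Fin.cons j t0} (by simp) (by simpa using Nat.succ_le_of_lt hd)
      simp only [Gu] at h1
      by_contra hne
      apply h1
      congr 1
      funext j'
      by_cases hj : j' = j
      · subst hj
        have heqn : Gu d f ε v (fun t => flipS x {Fin.cons j' t0} (Fin.cons j' t))
            = Gu d f ε v (fun t => x (Fin.cons j' t)) := by
          revert hne
          cases Gu d f ε v (fun t => flipS x {Fin.cons j' t0} (Fin.cons j' t)) <;>
            cases Gu d f ε v (fun t => x (Fin.cons j' t)) <;> simp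
        rw [show (fun t => flipS x {Fin.cons j' t0} (Fin.cons j' t))
              = (fun t => flipS x {Fin.cons j' t0} (Fin.cons j' t)) from rfl, heqn]
      · have hbl : (fun t => flipS x {Fin.cons j t0} (Fin.cons j' t))
            = fun t => x (Fin.cons j' t) := by
          funext t
          simp only [flipS, Finset.mem_singleton]
          rw [if_neg]
          intro h
          exact hj (Fin.cons_inj.mp h).1
        rw [hbl]
    refine ⟨fun j => xor (ε v j) (Gu d f ε v (fun t => x (Fin.cons j t))), fun T h1 h2 => ?_⟩
    have key := hx (T.map ⟨_, einj⟩) (by simpa using h1) (by simpa using h2)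
    have heq : Gu d f ε (v + 1) (flipS x (T.map ⟨_, einj⟩))
        = f (flipS (fun j => xor (ε v j) (Gu d f ε v (fun t => x (Fin.cons j t)))) T) := by
      show f _ = f _
      congr 1
      funext j
      by_cases hj : j ∈ T
      · have hbl : (fun t => flipS x (T.map ⟨_, einj⟩) (Fin.cons j t))
            = fun t => flipS x {Fin.cons j t0} (Fin.cons j t) := by
          funext t
          simp only [flipS, Finset.mem_map, Function.Embedding.coeFn_mk, Finset.mem_singleton]
          by_cases ht : t = t0
          · subst ht
            rw [if_pos ⟨j, hj, rfl⟩, if_pos rfl]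
          · rw [if_neg, if_neg]
            · intro h
              exact ht (Fin.cons_inj.mp h).2
            · rintro ⟨a, ha, hae⟩
              exact ht (Fin.cons_inj.mp hae).2.symm
        rw [hbl, key1 j]
        simp [flipS, hj, Bool.xor_not]
      · have hbl : (fun t => flipS x (T.map ⟨_, einj⟩) (Fin.cons j t))
            = fun t => x (Fin.cons j t) := by
          funext t
          simp only [flipS, Finset.mem_map, Function.Embedding.coeFn_mk]
          rw [if_neg]
          rintro ⟨a, ha, hae⟩
          exact hj ((Fin.cons_inj.mp hae).1 ▸ ha)
        rw [hbl]
        simp [flipS, hj]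
    rw [heq] at key
    exact key
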